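/- For fixed x, y > 0 with x ≠ y, the function d ↦ K_d^t(x,y) (defined for d ≠ 0, 2) satisfies lim_{d→2} K_d^t(x,y) = K_2^t(x,y), where K_2^t(x,y) = −(√x √y/(x−y)^3)((x+y) log(x/y) + 2(y−x)). -/

import Mathlib

open Real Filter

/-- The two-variable curvature function `K_d^t` of the `d`-dimensional
noncommutative torus with conformally flat functional metric, for `f(t) = t`. -/
noncomputable def Kdt (d x y : ℝ) : ℝ :=
  4 * x ^ (2 - 3 * d / 4) * y ^ (2 - 3 * d / 4) / (d * (d - 2) * (x - y) ^ 3) *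
    ((d - 1) * x ^ (d / 2) * y ^ (d / 2 - 1) - (d - 1) * x ^ (d / 2 - 1) * y ^ (d / 2) -
      x ^ (d - 1) + y ^ (d - 1))

/-- The two-dimensional curvature function
`K_2^t(x,y) = −(√x √y/(x−y)³)((x+y)log(x/y) + 2(y−x))`. -/
noncomputable def K2t (x y : ℝ) : ℝ :=
  -(Real.sqrt x * Real.sqrt y / (x - y) ^ 3) * ((x + y) * log (x / y) + 2 * (y - x))

lemma aux_rpow_deriv {c : ℝ} (hc : 0 < c) (m b a : ℝ) :
    HasDerivAt (fun d : ℝ => c ^ (d * m + b)) (c ^ (a * m + b) * log c * m) a := by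
  have h1 : HasDerivAt (fun d : ℝ => d * m + b) m a := by
    simpa using ((hasDerivAt_id a).mul_const m).add_const b
  exact HasDerivAt.comp a ((Real.hasStrictDerivAt_const_rpow hc (a * m + b)).hasDerivAt) h1

/-- For fixed `x ≠ y` positive, `K_d^t(x,y) → K_2^t(x,y)` as `d → 2`. -/
theorem Kdt_tendsto_K2t (x y : ℝ) (hx : 0 < x) (hy : 0 < y) (hxy : x ≠ y) :
    Tendsto (fun d : ℝ => Kdt d x y) (nhdsWithin 2 {(2 : ℝ)}ᶜ) (nhds (K2t x y)) := by
  have hxy' : x - y ≠ 0 := sub_ne_zero.mpr hxy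
  have hc3 : (x - y) ^ 3 ≠ 0 := pow_ne_zero 3 hxy'
  set N : ℝ → ℝ := fun d => (d - 1) * x ^ (d / 2) * y ^ (d / 2 - 1) -
      (d - 1) * x ^ (d / 2 - 1) * y ^ (d / 2) - x ^ (d - 1) + y ^ (d - 1) with hNdef
  set D : ℝ := (x - y) + (x - y) * (log x + log y) / 2 - x * log x + y * log y with hDdef
  have hNeq : N = fun d => (d - 1) * x ^ (d * (1/2) + 0) * y ^ (d * (1/2) + (-1)) -
      (d - 1) * x ^ (d * (1/2) + (-1)) * y ^ (d * (1/2) + 0) - x ^ (d * 1 + (-1)) +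
      y ^ (d * 1 + (-1)) := by
    funext d
    have e1 : d / 2 = d * (1/2) + 0 := by ring
    have e2 : d / 2 - 1 = d * (1/2) + (-1) := by ring
    have e3 : d - 1 = d * 1 + (-1) := by ring
    simp only [hNdef]
    rw [e2, e1, e3]
  have hid : HasDerivAt (fun d : ℝ => d - 1) 1 2 := by
    simpa using (hasDerivAt_id (2:ℝ)).sub_const 1
  have hN' : HasDerivAt N D 2 := by
    rw [hNeq]
    have h := ((((hid.mul (aux_rpow_deriv hx (1/2) 0 2)).mul
        (aux_rpow_deriv hy (1/2) (-1) 2)).sub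
        ((hid.mul (aux_rpow_deriv hx (1/2) (-1) 2)).mul
        (aux_rpow_deriv hy (1/2) 0 2))).sub (aux_rpow_deriv hx 1 (-1) 2)).add
        (aux_rpow_deriv hy 1 (-1) 2)
    refine h.congr_deriv ?_
    norm_num [hDdef]
    ring
  have hN2 : N 2 = 0 := by
    simp only [hNdef]
    norm_num
  have hslope : Tendsto (slope N 2) (nhdsWithin 2 {(2:ℝ)}ᶜ) (nhds D) :=
    hasDerivAt_iff_tendsto_slope.mp hN'
  have hden : (2:ℝ) * (x - y) ^ 3 ≠ 0 := mul_ne_zero two_ne_zero hc3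
  have hC : Tendsto (fun d : ℝ => 4 * x ^ (2 - 3 * d / 4) * y ^ (2 - 3 * d / 4) / (d * (x - y) ^ 3))
      (nhdsWithin 2 {(2:ℝ)}ᶜ)
      (nhds (4 * x ^ (2 - 3 * 2 / 4 : ℝ) * y ^ (2 - 3 * 2 / 4 : ℝ) / (2 * (x - y) ^ 3))) := by
    apply ContinuousAt.continuousWithinAt
    have hcx : ContinuousAt (fun d : ℝ => x ^ (2 - 3 * d / 4)) 2 :=
      (Real.continuousAt_const_rpow hx.ne').comp (by fun_prop)
    have hcy : ContinuousAt (fun d : ℝ => y ^ (2 - 3 * d / 4)) 2 :=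
      (Real.continuousAt_const_rpow hy.ne').comp (by fun_prop)
    exact ContinuousAt.div ((continuousAt_const.mul hcx).mul hcy) (by fun_prop) hden
  have hmul := hC.mul hslope
  have heq : ∀ᶠ d in nhdsWithin 2 {(2:ℝ)}ᶜ,
      (fun d : ℝ => 4 * x ^ (2 - 3 * d / 4) * y ^ (2 - 3 * d / 4) / (d * (x - y) ^ 3)) d *
        slope N 2 d = Kdt d x y := by
    filter_upwards [self_mem_nhdsWithin,
      eventually_nhdsWithin_of_eventually_nhds (eventually_ne_nhds (by norm_num : (2:ℝ) ≠ 0))]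
      with d hd2 hd0
    have hd2' : d - 2 ≠ 0 := sub_ne_zero.mpr hd2
    have key : ∀ A n : ℝ, A / (d * (x - y) ^ 3) * (n / (d - 2)) =
        A / (d * (d - 2) * (x - y) ^ 3) * n := by
      intro A n
      field_simp
      try ring
      try simp
    rw [slope_def_field, hN2, sub_zero]
    simp only [hNdef, Kdt]
    exact key _ _
  have hlim := hmul.congr' heq
  have hval : 4 * x ^ (2 - 3 * 2 / 4 : ℝ) * y ^ (2 - 3 * 2 / 4 : ℝ) / (2 * (x - y) ^ 3) * D =
      K2t x y := by
    have e : (2 - 3 * 2 / 4 : ℝ) = 1 / 2 := by norm_num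
    rw [e, ← Real.sqrt_eq_rpow, ← Real.sqrt_eq_rpow, K2t, Real.log_div hx.ne' hy.ne', hDdef]
    field_simp
    ring
  rwa [hval] at hlim
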